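/- Let N ≥ 1 and X = Σ_{k=0}^{N} Σ_{j=0}^{N−k} f_{j,k}(x,y) p₁^j p₂^{N−k−j} with smooth f_{j,k}: ℝ² → ℝ. If {H, X} = 0 identically on ℝ⁴, then the leading coefficients satisfy ∂_x f_{j−1,0} + ∂_y f_{j,0} = 0 on ℝ² for all 0 ≤ j ≤ N+1 (with the convention f_{−1,0} := 0 and f_{N+1,0} := 0); equivalently, the leading part Σ_{j=0}^{N} f_{j,0} p₁^j p₂^{N−j} Poisson-commutes with the free Hamiltonian p₁² + p₂². -/

import Mathlib

noncomputable section

/-- Partial derivative with respect to `x` of a function on `ℝ²`. -/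
def pdx (f : ℝ × ℝ → ℝ) : ℝ × ℝ → ℝ := fun q => fderiv ℝ f q (1, 0)

/-- Partial derivative with respect to `y` of a function on `ℝ²`. -/
def pdy (f : ℝ × ℝ → ℝ) : ℝ × ℝ → ℝ := fun q => fderiv ℝ f q (0, 1)

/-- The Poisson bracket on phase space `ℝ⁴` with coordinates `(x, y, p₁, p₂)`. -/
def pbr (F G : ℝ × ℝ × ℝ × ℝ → ℝ) : ℝ × ℝ × ℝ × ℝ → ℝ := fun z =>
  fderiv ℝ F z (0, 0, 1, 0) * fderiv ℝ G z (1, 0, 0, 0)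
    + fderiv ℝ F z (0, 0, 0, 1) * fderiv ℝ G z (0, 1, 0, 0)
    - fderiv ℝ F z (1, 0, 0, 0) * fderiv ℝ G z (0, 0, 1, 0)
    - fderiv ℝ F z (0, 1, 0, 0) * fderiv ℝ G z (0, 0, 0, 1)

/-- The classical Hamiltonian `H = p₁² + p₂² + V(x,y)`. -/
def Ham (V : ℝ × ℝ → ℝ) : ℝ × ℝ × ℝ × ℝ → ℝ := fun z =>
  z.2.2.1 ^ 2 + z.2.2.2 ^ 2 + V (z.1, z.2.1)

/-- The free Hamiltonian `H₀ = p₁² + p₂²`. -/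
def Ham0 : ℝ × ℝ × ℝ × ℝ → ℝ := fun z => z.2.2.1 ^ 2 + z.2.2.2 ^ 2

/-- The candidate integral `X = Σ_{k=0}^{N} Σ_{j=0}^{N−k} f_{j,k}(x,y) p₁^j p₂^{N−k−j}`. -/
def Xfun (N : ℕ) (f : ℤ → ℤ → ℝ × ℝ → ℝ) : ℝ × ℝ × ℝ × ℝ → ℝ := fun z =>
  ∑ k ∈ Finset.range (N + 1), ∑ j ∈ Finset.range (N - k + 1),
    f (j : ℤ) (k : ℤ) (z.1, z.2.1) * z.2.2.1 ^ j * z.2.2.2 ^ (N - k - j)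

/-- The leading part `Σ_{j=0}^{N} f_{j,0} p₁^j p₂^{N−j}` of the integral. -/
def Xlead (N : ℕ) (f : ℤ → ℤ → ℝ × ℝ → ℝ) : ℝ × ℝ × ℝ × ℝ → ℝ := fun z =>
  ∑ j ∈ Finset.range (N + 1),
    f (j : ℤ) 0 (z.1, z.2.1) * z.2.2.1 ^ j * z.2.2.2 ^ (N - j)

section Aux

abbrev P4 := ℝ × ℝ × ℝ × ℝ

def π3c : P4 →L[ℝ] ℝ :=
  (ContinuousLinearMap.fst ℝ ℝ ℝ).comp
    ((ContinuousLinearMap.snd ℝ ℝ (ℝ × ℝ)).comp (ContinuousLinearMap.snd ℝ ℝ (ℝ × ℝ × ℝ)))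

def π4c : P4 →L[ℝ] ℝ :=
  (ContinuousLinearMap.snd ℝ ℝ ℝ).comp
    ((ContinuousLinearMap.snd ℝ ℝ (ℝ × ℝ)).comp (ContinuousLinearMap.snd ℝ ℝ (ℝ × ℝ × ℝ)))

def Lqc : P4 →L[ℝ] ℝ × ℝ :=
  (ContinuousLinearMap.fst ℝ ℝ (ℝ × ℝ × ℝ)).prod
    ((ContinuousLinearMap.fst ℝ ℝ (ℝ × ℝ)).comp (ContinuousLinearMap.snd ℝ ℝ (ℝ × ℝ × ℝ)))

lemma hπ3 (z : P4) : HasFDerivAt (fun z : P4 => z.2.2.1) π3c z :=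
  hasFDerivAt_fst.comp z (hasFDerivAt_snd.comp z hasFDerivAt_snd)

lemma hπ4 (z : P4) : HasFDerivAt (fun z : P4 => z.2.2.2) π4c z :=
  hasFDerivAt_snd.comp z (hasFDerivAt_snd.comp z hasFDerivAt_snd)

lemma hLq (z : P4) : HasFDerivAt (fun z : P4 => (z.1, z.2.1)) Lqc z :=
  hasFDerivAt_fst.prodMk (hasFDerivAt_fst.comp z hasFDerivAt_snd)

lemma hp1pow (j : ℕ) (z : P4) :
    HasFDerivAt (fun z : P4 => z.2.2.1 ^ j) (((j : ℝ) * z.2.2.1 ^ (j - 1)) • π3c) z :=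
  (hasDerivAt_pow j z.2.2.1).comp_hasFDerivAt z (hπ3 z)

lemma hp2pow (j : ℕ) (z : P4) :
    HasFDerivAt (fun z : P4 => z.2.2.2 ^ j) (((j : ℝ) * z.2.2.2 ^ (j - 1)) • π4c) z :=
  (hasDerivAt_pow j z.2.2.2).comp_hasFDerivAt z (hπ4 z)

lemma hgq (g : ℝ × ℝ → ℝ) (hg : ContDiff ℝ (⊤ : ℕ∞) g) (z : P4) :
    HasFDerivAt (fun z : P4 => g (z.1, z.2.1)) ((fderiv ℝ g (z.1, z.2.1)).comp Lqc) z :=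
  ((hg.differentiable (by simp) (z.1, z.2.1)).hasFDerivAt).comp z (hLq z)

lemma fderiv_Xfun (N : ℕ) (f : ℤ → ℤ → ℝ × ℝ → ℝ) (hf : ∀ j k, ContDiff ℝ (⊤ : ℕ∞) (f j k))
    (z : P4) (v : P4) :
    fderiv ℝ (Xfun N f) z v =
      ∑ k ∈ Finset.range (N + 1), ∑ j ∈ Finset.range (N - k + 1),
        (fderiv ℝ (f (j : ℤ) (k : ℤ)) (z.1, z.2.1) (v.1, v.2.1) * z.2.2.1 ^ j * z.2.2.2 ^ (N - k - j)
          + f (j : ℤ) (k : ℤ) (z.1, z.2.1) * ((j : ℝ) * z.2.2.1 ^ (j - 1) * v.2.2.1) * z.2.2.2 ^ (N - k - j)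
          + f (j : ℤ) (k : ℤ) (z.1, z.2.1) * z.2.2.1 ^ j * (((N - k - j : ℕ) : ℝ) * z.2.2.2 ^ (N - k - j - 1) * v.2.2.2)) := by
  have h : HasFDerivAt (Xfun N f)
      (∑ k ∈ Finset.range (N + 1), ∑ j ∈ Finset.range (N - k + 1),
        ((fun z : P4 => f (j : ℤ) (k : ℤ) (z.1, z.2.1) * z.2.2.1 ^ j) z •
            ((((N - k - j : ℕ) : ℝ) * z.2.2.2 ^ (N - k - j - 1)) • π4c)
          + (fun z : P4 => z.2.2.2 ^ (N - k - j)) z •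
            ((fun z : P4 => f (j : ℤ) (k : ℤ) (z.1, z.2.1)) z • (((j : ℝ) * z.2.2.1 ^ (j - 1)) • π3c)
              + (fun z : P4 => z.2.2.1 ^ j) z • (fderiv ℝ (f (j : ℤ) (k : ℤ)) (z.1, z.2.1)).comp Lqc))) z := by
    exact HasFDerivAt.fun_sum fun k _ => HasFDerivAt.fun_sum fun j _ =>
      ((hgq _ (hf _ _) z).fun_mul (hp1pow j z)).fun_mul (hp2pow (N - k - j) z)
  rw [h.fderiv]
  simp only [ContinuousLinearMap.sum_apply, ContinuousLinearMap.add_apply,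
    ContinuousLinearMap.smul_apply, ContinuousLinearMap.comp_apply, π3c, π4c, Lqc,
    ContinuousLinearMap.prod_apply, ContinuousLinearMap.coe_fst', ContinuousLinearMap.coe_snd',
    smul_eq_mul]
  refine Finset.sum_congr rfl fun k _ => Finset.sum_congr rfl fun j _ => ?_
  ring

lemma fderiv_Xlead (N : ℕ) (f : ℤ → ℤ → ℝ × ℝ → ℝ) (hf : ∀ j k, ContDiff ℝ (⊤ : ℕ∞) (f j k))
    (z : P4) (v : P4) :
    fderiv ℝ (Xlead N f) z v =
      ∑ j ∈ Finset.range (N + 1),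
        (fderiv ℝ (f (j : ℤ) 0) (z.1, z.2.1) (v.1, v.2.1) * z.2.2.1 ^ j * z.2.2.2 ^ (N - j)
          + f (j : ℤ) 0 (z.1, z.2.1) * ((j : ℝ) * z.2.2.1 ^ (j - 1) * v.2.2.1) * z.2.2.2 ^ (N - j)
          + f (j : ℤ) 0 (z.1, z.2.1) * z.2.2.1 ^ j * (((N - j : ℕ) : ℝ) * z.2.2.2 ^ (N - j - 1) * v.2.2.2)) := by
  have h : HasFDerivAt (Xlead N f)
      (∑ j ∈ Finset.range (N + 1),
        ((fun z : P4 => f (j : ℤ) 0 (z.1, z.2.1) * z.2.2.1 ^ j) z •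
            ((((N - j : ℕ) : ℝ) * z.2.2.2 ^ (N - j - 1)) • π4c)
          + (fun z : P4 => z.2.2.2 ^ (N - j)) z •
            ((fun z : P4 => f (j : ℤ) 0 (z.1, z.2.1)) z • (((j : ℝ) * z.2.2.1 ^ (j - 1)) • π3c)
              + (fun z : P4 => z.2.2.1 ^ j) z • (fderiv ℝ (f (j : ℤ) 0) (z.1, z.2.1)).comp Lqc))) z := by
    exact HasFDerivAt.fun_sum fun j _ =>
      ((hgq _ (hf _ _) z).fun_mul (hp1pow j z)).fun_mul (hp2pow (N - j) z)
  rw [h.fderiv]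
  simp only [ContinuousLinearMap.sum_apply, ContinuousLinearMap.add_apply,
    ContinuousLinearMap.smul_apply, ContinuousLinearMap.comp_apply, π3c, π4c, Lqc,
    ContinuousLinearMap.prod_apply, ContinuousLinearMap.coe_fst', ContinuousLinearMap.coe_snd',
    smul_eq_mul]
  refine Finset.sum_congr rfl fun j _ => ?_
  ring

lemma fderiv_Ham (V : ℝ × ℝ → ℝ) (hV : ContDiff ℝ (⊤ : ℕ∞) V) (z : P4) (v : P4) :
    fderiv ℝ (Ham V) z v =
      2 * z.2.2.1 * v.2.2.1 + 2 * z.2.2.2 * v.2.2.2 + fderiv ℝ V (z.1, z.2.1) (v.1, v.2.1) := by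
  have h : HasFDerivAt (Ham V)
      ((((2 : ℕ) : ℝ) * z.2.2.1 ^ (2 - 1)) • π3c + (((2 : ℕ) : ℝ) * z.2.2.2 ^ (2 - 1)) • π4c
        + (fderiv ℝ V (z.1, z.2.1)).comp Lqc) z :=
    ((hp1pow 2 z).add (hp2pow 2 z)).add (hgq V hV z)
  rw [h.fderiv]
  simp only [ContinuousLinearMap.add_apply, ContinuousLinearMap.smul_apply,
    ContinuousLinearMap.comp_apply, π3c, π4c, Lqc, ContinuousLinearMap.prod_apply,
    ContinuousLinearMap.coe_fst', ContinuousLinearMap.coe_snd', smul_eq_mul]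
  norm_num

lemma fderiv_Ham0 (z : P4) (v : P4) :
    fderiv ℝ Ham0 z v = 2 * z.2.2.1 * v.2.2.1 + 2 * z.2.2.2 * v.2.2.2 := by
  have h : HasFDerivAt Ham0
      ((((2 : ℕ) : ℝ) * z.2.2.1 ^ (2 - 1)) • π3c + (((2 : ℕ) : ℝ) * z.2.2.2 ^ (2 - 1)) • π4c) z :=
    (hp1pow 2 z).add (hp2pow 2 z)
  rw [h.fderiv]
  simp only [ContinuousLinearMap.add_apply, ContinuousLinearMap.smul_apply, π3c, π4c,
    ContinuousLinearMap.comp_apply, ContinuousLinearMap.coe_fst', ContinuousLinearMap.coe_snd',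
    smul_eq_mul]
  norm_num

def Qpoly (N : ℕ) (f : ℤ → ℤ → ℝ × ℝ → ℝ) (V : ℝ × ℝ → ℝ) (q : ℝ × ℝ) (u : ℝ) : Polynomial ℝ :=
  ∑ k ∈ Finset.range (N + 1), ∑ j ∈ Finset.range (N - k + 1),
    (Polynomial.C (2 * pdx (f j k) q * u ^ (j + 1) + 2 * pdy (f j k) q * u ^ j)
        * Polynomial.X ^ (N - k + 1)
      - Polynomial.C (pdx V q * (f j k q * ((j : ℝ) * u ^ (j - 1))))
        * Polynomial.X ^ ((j - 1) + (N - k - j))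
      - Polynomial.C (pdy V q * (f j k q * (((N - k - j : ℕ) : ℝ) * u ^ j)))
        * Polynomial.X ^ (j + (N - k - j - 1)))

def Rpoly (N : ℕ) (f : ℤ → ℤ → ℝ × ℝ → ℝ) (q : ℝ × ℝ) : Polynomial ℝ :=
  ∑ j ∈ Finset.range (N + 1),
    (Polynomial.C (2 * pdx (f j 0) q) * Polynomial.X ^ (j + 1)
      + Polynomial.C (2 * pdy (f j 0) q) * Polynomial.X ^ j)

lemma pbr_eval (N : ℕ) (f : ℤ → ℤ → ℝ × ℝ → ℝ) (hf : ∀ j k, ContDiff ℝ (⊤ : ℕ∞) (f j k))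
    (V : ℝ × ℝ → ℝ) (hV : ContDiff ℝ (⊤ : ℕ∞) V) (q : ℝ × ℝ) (u t : ℝ) :
    pbr (Ham V) (Xfun N f) (q.1, q.2, t * u, t) = Polynomial.eval t (Qpoly N f V q u) := by
  simp only [pbr]
  rw [fderiv_Ham V hV, fderiv_Ham V hV, fderiv_Ham V hV, fderiv_Ham V hV,
      fderiv_Xfun N f hf, fderiv_Xfun N f hf, fderiv_Xfun N f hf, fderiv_Xfun N f hf]
  simp only [Qpoly, Polynomial.eval_finset_sum, Polynomial.eval_sub, Polynomial.eval_add,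
    Polynomial.eval_mul, Polynomial.eval_C, Polynomial.eval_pow, Polynomial.eval_X, pdx, pdy,
    Prod.mk.eta, mul_zero, zero_mul, add_zero, zero_add, mul_one, Prod.mk_zero_zero, map_zero]
  simp only [Finset.mul_sum, Finset.sum_sub_distrib]
  congr 1
  congr 1
  · rw [← Finset.sum_add_distrib]
    refine Finset.sum_congr rfl fun k hk => ?_
    rw [← Finset.sum_add_distrib]
    refine Finset.sum_congr rfl fun j hj => ?_
    have hk' : k ≤ N := Nat.lt_succ_iff.mp (Finset.mem_range.mp hk)
    have hj' : j ≤ N - k := Nat.lt_succ_iff.mp (Finset.mem_range.mp hj)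
    have e1 : N - k + 1 = j + 1 + (N - k - j) := by omega
    rw [e1]
    ring
  · refine Finset.sum_congr rfl fun k hk => Finset.sum_congr rfl fun j hj => ?_
    ring
  · refine Finset.sum_congr rfl fun k hk => Finset.sum_congr rfl fun j hj => ?_
    ring

lemma coeff_Qpoly (N : ℕ) (f : ℤ → ℤ → ℝ × ℝ → ℝ) (V : ℝ × ℝ → ℝ) (q : ℝ × ℝ) (u : ℝ) :
    (Qpoly N f V q u).coeff (N + 1) = Polynomial.eval u (Rpoly N f q) := by
  simp only [Qpoly, Polynomial.finset_sum_coeff, Polynomial.coeff_sub, Polynomial.coeff_C_mul,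
    Polynomial.coeff_X_pow]
  rw [Finset.sum_eq_single_of_mem 0 (Finset.mem_range.mpr (by omega))]
  · simp only [Nat.sub_zero]
    rw [Rpoly, Polynomial.eval_finset_sum]
    refine Finset.sum_congr rfl fun j hj => ?_
    have hj' : j ≤ N := Nat.lt_succ_iff.mp (Finset.mem_range.mp hj)
    rw [if_neg (show ¬(N + 1 = j - 1 + (N - j)) by omega),
        if_neg (show ¬(N + 1 = j + (N - j - 1)) by omega)]
    simp only [if_true, Polynomial.eval_add, Polynomial.eval_mul, Polynomial.eval_C,
      Polynomial.eval_pow, Polynomial.eval_X, Nat.cast_zero]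
    ring
  · intro k hk hk0
    refine Finset.sum_eq_zero fun j hj => ?_
    have hk' : k ≤ N := Nat.lt_succ_iff.mp (Finset.mem_range.mp hk)
    have hj' : j ≤ N - k := Nat.lt_succ_iff.mp (Finset.mem_range.mp hj)
    rw [if_neg (by omega), if_neg (by omega), if_neg (by omega)]
    simp

lemma pdx_zero (q : ℝ × ℝ) : pdx (0 : ℝ × ℝ → ℝ) q = 0 := by
  simp only [pdx]
  rw [show (0 : ℝ × ℝ → ℝ) = (fun _ => (0:ℝ)) from rfl, fderiv_const_apply]
  simp

lemma pdy_zero (q : ℝ × ℝ) : pdy (0 : ℝ × ℝ → ℝ) q = 0 := by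
  simp only [pdy]
  rw [show (0 : ℝ × ℝ → ℝ) = (fun _ => (0:ℝ)) from rfl, fderiv_const_apply]
  simp

end Aux

/-- if `{H, X} = 0` identically on `ℝ⁴`, then
`∂_x f_{j−1,0} + ∂_y f_{j,0} = 0` on `ℝ²` for all `0 ≤ j ≤ N+1` (with the convention
`f_{−1,0} = f_{N+1,0} = 0`); equivalently, the leading part Poisson-commutes with the
free Hamiltonian `p₁² + p₂²`. -/
theorem stmt_2 (N : ℕ) (hN : 1 ≤ N) (V : ℝ × ℝ → ℝ) (hV : ContDiff ℝ (⊤ : ℕ∞) V)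
    (f : ℤ → ℤ → ℝ × ℝ → ℝ) (hf : ∀ j k, ContDiff ℝ (⊤ : ℕ∞) (f j k))
    (hzero : ∀ j k : ℤ, (j < 0 ∨ k < 0 ∨ (N : ℤ) < j + k) → f j k = 0)
    (hcomm : ∀ z : ℝ × ℝ × ℝ × ℝ, pbr (Ham V) (Xfun N f) z = 0) :
    (∀ j : ℤ, 0 ≤ j → j ≤ (N : ℤ) + 1 →
        ∀ q : ℝ × ℝ, pdx (f (j - 1) 0) q + pdy (f j 0) q = 0) ∧
      (∀ z : ℝ × ℝ × ℝ × ℝ, pbr Ham0 (Xlead N f) z = 0) := by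
  have hpd : ∀ (g : ℝ × ℝ → ℝ), g = 0 → ∀ (q : ℝ × ℝ) (w : ℝ × ℝ), fderiv ℝ g q w = 0 := by
    intro g hg q w
    rw [hg, show (0 : ℝ × ℝ → ℝ) = (fun _ => (0:ℝ)) from rfl, fderiv_const_apply]
    simp
  have hmain : ∀ q : ℝ × ℝ, ∀ n : ℕ, n ≤ N + 1 →
      pdx (f ((n : ℤ) - 1) 0) q + pdy (f (n : ℤ) 0) q = 0 := by
    intro q
    have hQ : ∀ u : ℝ, Qpoly N f V q u = 0 := by
      intro u
      refine Polynomial.funext fun t => ?_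
      rw [← pbr_eval N f hf V hV q u t, hcomm]
      simp
    have hR : Rpoly N f q = 0 := by
      refine Polynomial.funext fun u => ?_
      rw [← coeff_Qpoly N f V q u, hQ u]
      simp
    intro n hn
    have h := congrArg (fun p => Polynomial.coeff p n) hR
    simp only [Rpoly, Polynomial.finset_sum_coeff, Polynomial.coeff_add, Polynomial.coeff_C_mul,
      Polynomial.coeff_X_pow, Polynomial.coeff_zero] at h
    rw [Finset.sum_add_distrib] at h
    have hA : (∑ x ∈ Finset.range (N + 1),
        2 * pdx (f (x : ℤ) 0) q * if n = x + 1 then (1:ℝ) else 0)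
        = 2 * pdx (f ((n : ℤ) - 1) 0) q := by
      rcases Nat.eq_zero_or_pos n with h0 | h0
      · subst h0
        rw [Finset.sum_eq_zero fun j hj => by rw [if_neg (by omega), mul_zero]]
        have hz : f (((0:ℕ) : ℤ) - 1) 0 = 0 := hzero _ _ (by left; omega)
        rw [hz, pdx_zero, mul_zero]
      · obtain ⟨m, rfl⟩ : ∃ m, n = m + 1 := ⟨n - 1, by omega⟩
        rw [Finset.sum_eq_single_of_mem m (Finset.mem_range.mpr (by omega))
          fun j hj hjm => by rw [if_neg (by omega), mul_zero]]
        rw [if_pos rfl, mul_one]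
        have e : (((m + 1 : ℕ)) : ℤ) - 1 = (m : ℤ) := by omega
        rw [e]
    have hB : (∑ x ∈ Finset.range (N + 1),
        2 * pdy (f (x : ℤ) 0) q * if n = x then (1:ℝ) else 0)
        = 2 * pdy (f (n : ℤ) 0) q := by
      rcases Nat.lt_or_ge n (N + 1) with h0 | h0
      · rw [Finset.sum_eq_single_of_mem n (Finset.mem_range.mpr h0)
          fun j hj hjn => by rw [if_neg (by omega), mul_zero]]
        rw [if_pos rfl, mul_one]
      · have hn1 : n = N + 1 := by omega
        rw [Finset.sum_eq_zero fun j hj => by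
          have := Finset.mem_range.mp hj
          rw [if_neg (by omega), mul_zero]]
        have hz : f ((n : ℕ) : ℤ) 0 = 0 :=
          hzero _ _ (by right; right; omega)
        rw [hz, pdy_zero, mul_zero]
    rw [hA, hB] at h
    linarith
  refine ⟨?_, ?_⟩
  · intro j hj0 hj1 q
    lift j to ℕ using hj0 with n
    exact hmain q n (by exact_mod_cast hj1)
  · intro z
    obtain ⟨x, y, p1, p2⟩ := z
    simp only [pbr]
    rw [fderiv_Ham0, fderiv_Ham0, fderiv_Ham0, fderiv_Ham0,
        fderiv_Xlead N f hf, fderiv_Xlead N f hf, fderiv_Xlead N f hf, fderiv_Xlead N f hf]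
    simp only [mul_zero, zero_mul, add_zero, zero_add, mul_one, Prod.mk_zero_zero, map_zero]
    have key : ∀ n : ℕ, n ≤ N + 1 →
        (fderiv ℝ (f ((n : ℤ) - 1) 0) (x, y)) (1, 0)
          = -(fderiv ℝ (f (n : ℤ) 0) (x, y)) (0, 1) := by
      intro n hn
      have := hmain (x, y) n hn
      simp only [pdx, pdy] at this
      linarith
    have hT1 : (∑ n ∈ Finset.range (N + 2),
          2 * (fderiv ℝ (f ((n : ℤ) - 1) 0) (x, y)) (1, 0) * p1 ^ n * p2 ^ (N + 1 - n))
        = 2 * p1 * ∑ j ∈ Finset.range (N + 1),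
            (fderiv ℝ (f (j : ℤ) 0) (x, y)) (1, 0) * p1 ^ j * p2 ^ (N - j) := by
      rw [Finset.sum_range_succ'
        (fun n => 2 * (fderiv ℝ (f ((n : ℤ) - 1) 0) (x, y)) (1, 0) * p1 ^ n * p2 ^ (N + 1 - n))
        (N + 1)]
      have hg0 : 2 * (fderiv ℝ (f (((0:ℕ) : ℤ) - 1) 0) (x, y)) (1, 0) * p1 ^ 0
          * p2 ^ (N + 1 - 0) = 0 := by
        rw [hpd _ (hzero _ _ (by left; omega)) (x, y) (1, 0)]
        ring
      rw [hg0, add_zero, Finset.mul_sum]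
      refine Finset.sum_congr rfl fun j hj => ?_
      have e : (((j + 1 : ℕ)) : ℤ) - 1 = (j : ℤ) := by omega
      rw [e, Nat.succ_sub_succ]
      ring
    have hT2 : (∑ n ∈ Finset.range (N + 2),
          2 * (fderiv ℝ (f ((n : ℤ) - 1) 0) (x, y)) (1, 0) * p1 ^ n * p2 ^ (N + 1 - n))
        = -(2 * p2 * ∑ j ∈ Finset.range (N + 1),
            (fderiv ℝ (f (j : ℤ) 0) (x, y)) (0, 1) * p1 ^ j * p2 ^ (N - j)) := by
      have step1 : (∑ n ∈ Finset.range (N + 2),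
            2 * (fderiv ℝ (f ((n : ℤ) - 1) 0) (x, y)) (1, 0) * p1 ^ n * p2 ^ (N + 1 - n))
          = -(∑ n ∈ Finset.range (N + 2),
            2 * (fderiv ℝ (f (n : ℤ) 0) (x, y)) (0, 1) * p1 ^ n * p2 ^ (N + 1 - n)) := by
        rw [← Finset.sum_neg_distrib]
        refine Finset.sum_congr rfl fun n hn => ?_
        have hn' : n ≤ N + 1 := Nat.lt_succ_iff.mp (Finset.mem_range.mp hn)
        rw [key n hn']
        ring
      rw [step1]
      congr 1
      rw [Finset.sum_range_succ]
      have hlast : 2 * (fderiv ℝ (f (((N + 1 : ℕ)) : ℤ) 0) (x, y)) (0, 1) * p1 ^ (N + 1)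
          * p2 ^ (N + 1 - (N + 1)) = 0 := by
        rw [hpd _ (hzero _ _ (by right; right; omega)) (x, y) (0, 1)]
        ring
      rw [hlast, add_zero, Finset.mul_sum]
      refine Finset.sum_congr rfl fun j hj => ?_
      have hj' : j ≤ N := Nat.lt_succ_iff.mp (Finset.mem_range.mp hj)
      have e : N + 1 - j = (N - j) + 1 := by omega
      rw [e, pow_succ]
      ring
    linarith [hT1, hT2]
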